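/- Let p ∈ Δ(Y) for a finite set Y with unique mode y_1, and let ŷ_n be the empirical mode of n i.i.d. samples from p (ties broken arbitrarily). Then P(ŷ_n ≠ y_1) ≤ (m-1) exp(-n Δ_2²), where m = |Y| and Δ_2² = -ln(1 - (√p(y_1) - √p(y_2))²) with y_2 a second-most-likely class. -/

import Mathlib

open Finset Real

private lemma fib_prod {Y : Type*} [Fintype Y] [DecidableEq Y] {n : ℕ} (ω : Fin n → Y)
    (f : Y → ℝ) :
    ∏ j, f (ω j) = ∏ a : Y, f a ^ (Finset.univ.filter fun j => ω j = a).card := by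
  rw [← Finset.prod_fiberwise_of_maps_to (fun j _ => Finset.mem_univ (ω j))
      (fun j => f (ω j))]
  refine Finset.prod_congr rfl fun a _ => ?_
  rw [Finset.prod_congr rfl (fun j hj => by rw [(Finset.mem_filter.1 hj).2]),
    Finset.prod_const]

private lemma mode_aux {Y : Type*} [Fintype Y] [DecidableEq Y]
    (p : Y → ℝ) (hp0 : ∀ y, 0 ≤ p y) (y1 y : Y) (hy : y ≠ y1) (hle : p y ≤ p y1)
    {n : ℕ} (ω : Fin n → Y)
    (hc : (Finset.univ.filter fun j => ω j = y1).card
        ≤ (Finset.univ.filter fun j => ω j = y).card) :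
    ∏ j, p (ω j)
      ≤ ∏ j, (fun a => if a = y1 ∨ a = y then Real.sqrt (p y1 * p y) else p a) (ω j) := by
  set g : Y → ℝ := fun a => if a = y1 ∨ a = y then Real.sqrt (p y1 * p y) else p a with hg
  set s : ℝ := Real.sqrt (p y1 * p y) with hsdef
  set N : Y → ℕ := fun a => (Finset.univ.filter fun j => ω j = a).card with hN
  rw [fib_prod ω p, fib_prod ω g]
  have hsplit : ∀ f : Y → ℝ, ∏ a, f a
      = f y1 * (f y * ∏ a ∈ (Finset.univ.erase y1).erase y, f a) := by
    intro f
    rw [Finset.mul_prod_erase _ f (Finset.mem_erase.2 ⟨hy, Finset.mem_univ y⟩),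
      Finset.mul_prod_erase _ f (Finset.mem_univ y1)]
  rw [hsplit fun a => p a ^ N a, hsplit fun a => g a ^ N a]
  have hgy1 : g y1 = s := if_pos (Or.inl rfl)
  have hgy : g y = s := if_pos (Or.inr rfl)
  have hrest : ∏ a ∈ (Finset.univ.erase y1).erase y, g a ^ N a
      = ∏ a ∈ (Finset.univ.erase y1).erase y, p a ^ N a := by
    refine Finset.prod_congr rfl fun a ha => ?_
    have h1 := (Finset.mem_erase.1 ha).1
    have h2 := (Finset.mem_erase.1 (Finset.mem_erase.1 ha).2).1
    rw [hg]; simp only [h1, h2, or_self, if_neg, not_or]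
    tauto
  rw [hgy1, hgy, hrest]
  set R : ℝ := ∏ a ∈ (Finset.univ.erase y1).erase y, p a ^ N a with hR
  have hR0 : 0 ≤ R := Finset.prod_nonneg fun a _ => pow_nonneg (hp0 a) _
  obtain ⟨k, hk⟩ : ∃ k, N y = N y1 + k := Nat.exists_eq_add_of_le hc
  have hs0 : 0 ≤ s := Real.sqrt_nonneg _
  have hs2 : s ^ 2 = p y1 * p y := Real.sq_sqrt (mul_nonneg (hp0 y1) (hp0 y))
  have hpys : p y ≤ s := by
    have h := Real.sqrt_le_sqrt (mul_le_mul_of_nonneg_right hle (hp0 y))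
    rwa [Real.sqrt_mul_self (hp0 y)] at h
  calc p y1 ^ N y1 * (p y ^ N y * R)
      = (s ^ 2) ^ N y1 * p y ^ k * R := by rw [hs2, hk]; ring
    _ ≤ (s ^ 2) ^ N y1 * s ^ k * R := by
        refine mul_le_mul_of_nonneg_right (mul_le_mul_of_nonneg_left ?_ ?_) hR0
        · exact pow_le_pow_left₀ (hp0 y) hpys k
        · positivity
    _ = s ^ N y1 * (s ^ N y * R) := by rw [hk]; ring

theorem empirical_mode_error {Y : Type*} [Fintype Y] [DecidableEq Y]
    (p : Y → ℝ) (hp0 : ∀ y, 0 ≤ p y) (hp1 : ∑ y, p y = 1)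
    (y1 y2 : Y) (h12 : y1 ≠ y2)
    (hmode : ∀ y, y ≠ y1 → p y < p y1)
    (hsec : ∀ y, y ≠ y1 → p y ≤ p y2)
    (n : ℕ)
    (hatY : (Fin n → Y) → Y)
    (hargmax : ∀ ω y, (Finset.univ.filter fun j => ω j = y).card
        ≤ (Finset.univ.filter fun j => ω j = hatY ω).card) :
    ∑ ω ∈ Finset.univ.filter (fun ω : Fin n → Y => hatY ω ≠ y1), ∏ j, p (ω j)
    ≤ ((Fintype.card Y : ℝ) - 1) *
        Real.exp (-(n : ℝ) * (-Real.log (1 - (Real.sqrt (p y1) - Real.sqrt (p y2)) ^ 2))) := by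
  set x : ℝ := 1 - (Real.sqrt (p y1) - Real.sqrt (p y2)) ^ 2 with hxdef
  have hp1le : p y1 ≤ 1 := hp1 ▸ Finset.single_le_sum (fun y _ => hp0 y) (Finset.mem_univ y1)
  have h21 : p y2 ≤ p y1 := (hmode y2 (Ne.symm h12)).le
  have hsq1 : Real.sqrt (p y1) ≤ 1 := Real.sqrt_le_one.mpr hp1le
  have hx0 : 0 ≤ x := by
    have h1 := Real.sqrt_nonneg (p y2)
    have h2 := Real.sqrt_le_sqrt h21
    rw [hxdef]; nlinarith
  -- per-class bound
  have key : ∀ y ∈ Finset.univ.erase y1,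
      ∑ ω ∈ (Finset.univ.filter fun ω : Fin n → Y => hatY ω ≠ y1).filter
          (fun ω => hatY ω = y), ∏ j, p (ω j)
      ≤ Real.exp ((n : ℝ) * Real.log x) := by
    intro y hy
    have hyne : y ≠ y1 := (Finset.mem_erase.1 hy).1
    have hley1 : p y ≤ p y1 := (hmode y hyne).le
    set g : Y → ℝ := fun a => if a = y1 ∨ a = y then Real.sqrt (p y1 * p y) else p a with hg
    have hg0 : ∀ a, 0 ≤ g a := by
      intro a; rw [hg]; dsimp only
      split
      · exact Real.sqrt_nonneg _
      · exact hp0 a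
    have step1 : ∑ ω ∈ (Finset.univ.filter fun ω : Fin n → Y => hatY ω ≠ y1).filter
          (fun ω => hatY ω = y), ∏ j, p (ω j)
        ≤ ∑ ω ∈ (Finset.univ.filter fun ω : Fin n → Y => hatY ω ≠ y1).filter
          (fun ω => hatY ω = y), ∏ j, g (ω j) := by
      refine Finset.sum_le_sum fun ω hω => ?_
      have hωy : hatY ω = y := (Finset.mem_filter.1 hω).2
      have hc : (Finset.univ.filter fun j => ω j = y1).card
          ≤ (Finset.univ.filter fun j => ω j = y).card := by
        rw [← hωy]; exact hargmax ω y1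
      exact mode_aux p hp0 y1 y hyne hley1 ω hc
    have step2 : ∑ ω ∈ (Finset.univ.filter fun ω : Fin n → Y => hatY ω ≠ y1).filter
          (fun ω => hatY ω = y), ∏ j, g (ω j)
        ≤ ∑ ω : Fin n → Y, ∏ j, g (ω j) :=
      Finset.sum_le_sum_of_subset_of_nonneg (Finset.subset_univ _)
        (fun ω _ _ => Finset.prod_nonneg fun j _ => hg0 (ω j))
    have step3 : ∑ ω : Fin n → Y, ∏ j, g (ω j) = (∑ a, g a) ^ n := by
      rw [← Fintype.piFinset_univ, ← Finset.prod_univ_sum]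
      simp
    have hsum : ∑ a, g a = 1 - (Real.sqrt (p y1) - Real.sqrt (p y)) ^ 2 := by
      have hdiff : ∑ a, (g a - p a) = (g y1 - p y1) + (g y - p y) := by
        rw [← Finset.sum_pair (f := fun a => g a - p a) (Ne.symm hyne)]
        refine (Finset.sum_subset (Finset.subset_univ _) fun a _ ha => ?_).symm
        have h1 : a ≠ y1 := fun h => ha (by simp [h])
        have h2 : a ≠ y := fun h => ha (by simp [h])
        simp [hg, h1, h2]
      have hgy1 : g y1 = Real.sqrt (p y1 * p y) := if_pos (Or.inl rfl)
      have hgy : g y = Real.sqrt (p y1 * p y) := if_pos (Or.inr rfl)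
      have e1 : Real.sqrt (p y1 * p y) = Real.sqrt (p y1) * Real.sqrt (p y) :=
        Real.sqrt_mul (hp0 y1) _
      have e2 : Real.sqrt (p y1) ^ 2 = p y1 := Real.sq_sqrt (hp0 y1)
      have e3 : Real.sqrt (p y) ^ 2 = p y := Real.sq_sqrt (hp0 y)
      have hsub : ∑ a, (g a - p a) = ∑ a, g a - ∑ a, p a := Finset.sum_sub_distrib _ _
      rw [hsub, hp1, hgy1, hgy, e1] at hdiff
      nlinarith [hdiff]
    have hxy0 : 0 ≤ 1 - (Real.sqrt (p y1) - Real.sqrt (p y)) ^ 2 := by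
      have h1 := Real.sqrt_nonneg (p y)
      have h2 := Real.sqrt_le_sqrt hley1
      nlinarith
    have hxyx : 1 - (Real.sqrt (p y1) - Real.sqrt (p y)) ^ 2 ≤ x := by
      have h1 := Real.sqrt_nonneg (p y)
      have h2 := Real.sqrt_le_sqrt (hsec y hyne)
      have h3 := Real.sqrt_le_sqrt h21
      rw [hxdef]; nlinarith
    refine step1.trans (step2.trans ?_)
    rw [step3, hsum]
    rcases hx0.lt_or_eq with hxpos | hxeq
    · have hE : Real.exp ((n : ℝ) * Real.log x) = x ^ n := by
        rw [← Real.log_pow, Real.exp_log (pow_pos hxpos n)]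
      rw [hE]
      exact pow_le_pow_left₀ hxy0 hxyx n
    · have hx00 : x = 0 := hxeq.symm
      have hyy : 1 - (Real.sqrt (p y1) - Real.sqrt (p y)) ^ 2 = 0 :=
        le_antisymm (hxyx.trans_eq hx00) hxy0
      rw [hyy, hx00, Real.log_zero, mul_zero, Real.exp_zero]
      exact zero_pow_le_one n
  -- assemble
  have hcard1 : 1 ≤ Fintype.card Y := Fintype.card_pos_iff.2 ⟨y1⟩
  have hexp : -(n : ℝ) * (-Real.log x) = (n : ℝ) * Real.log x := by ring
  have hfib := Finset.sum_fiberwise_of_maps_to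
      (s := Finset.univ.filter fun ω : Fin n → Y => hatY ω ≠ y1)
      (t := Finset.univ.erase y1) (g := hatY)
      (fun ω hω => Finset.mem_erase.2 ⟨(Finset.mem_filter.1 hω).2, Finset.mem_univ _⟩)
      (fun ω => ∏ j, p (ω j))
  rw [← hfib, hexp]
  calc ∑ y ∈ Finset.univ.erase y1,
        ∑ ω ∈ (Finset.univ.filter fun ω : Fin n → Y => hatY ω ≠ y1).filter
          (fun ω => hatY ω = y), ∏ j, p (ω j)
      ≤ ∑ y ∈ Finset.univ.erase y1, Real.exp ((n : ℝ) * Real.log x) :=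
        Finset.sum_le_sum key
    _ = ((Fintype.card Y : ℝ) - 1) * Real.exp ((n : ℝ) * Real.log x) := by
        rw [Finset.sum_const, Finset.card_erase_of_mem (Finset.mem_univ y1),
          Finset.card_univ, nsmul_eq_mul, Nat.cast_sub hcard1, Nat.cast_one]
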